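/- arXiv:2603.06419 — 7 statements merged into one kernel-verified Lean document; each statement's English description precedes it below -/
import Mathlib

section
/- Let H be a continuous linear operator on a finite-dimensional complex inner product space E, and for X a continuous linear operator on E define the γ-dynamics γ^t(X) = exp(itH†) X exp(−itH) and the map δ_γ(X) = i(H†X − XH), where H† denotes the adjoint of H. Then the following are equivalent: (1) δ_γ(1) = 0; (2) H = H†; (3) γ^t(1) = 1 for all t ∈ ℝ; (4) γ^t(XY) = γ^t(X)γ^t(Y) for all t ∈ ℝ and all operators X, Y; (5) δ_γ satisfies the Leibniz rule δ_γ(XY) = δ_γ(X)Y + Xδ_γ(Y) for all operators X, Y. -/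
open ContinuousLinearMap NormedSpace

/-- For the γ-dynamics `γ^t(X) = exp(itH†) X exp(−itH)` and the map
`δ_γ(X) = i(H†X − XH)`, the following are equivalent:
(1) `δ_γ(1) = 0`; (2) `H = H†`; (3) `γ^t(1) = 1` for all `t`;
(4) `γ^t` is multiplicative for all `t`; (5) `δ_γ` satisfies the Leibniz rule. -/
theorem gamma_dynamics_tfae
    {E : Type*} [NormedAddCommGroup E] [InnerProductSpace ℂ E] [FiniteDimensional ℂ E]
    (H : E →L[ℂ] E)
    (γ : ℝ → (E →L[ℂ] E) → (E →L[ℂ] E))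
    (hγ : ∀ (t : ℝ) (X : E →L[ℂ] E),
      γ t X = exp ((Complex.I * t) • adjoint H) * X * exp (-(Complex.I * t) • H))
    (δ : (E →L[ℂ] E) → (E →L[ℂ] E))
    (hδ : ∀ X : E →L[ℂ] E, δ X = Complex.I • (adjoint H * X - X * H)) :
    [δ 1 = 0,
     H = adjoint H,
     ∀ t : ℝ, γ t 1 = 1,
     ∀ (t : ℝ) (X Y : E →L[ℂ] E), γ t (X * Y) = γ t X * γ t Y,
     ∀ X Y : E →L[ℂ] E, δ (X * Y) = δ X * Y + X * δ Y].TFAE := by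
  let +nondep : NormedAlgebra ℚ (E →L[ℂ] E) := .restrictScalars ℚ ℂ (E →L[ℂ] E)
  have hinv : ∀ (c : ℂ) (A : E →L[ℂ] E), exp (c • A) * exp (-c • A) = 1 := by
    intro c A
    rw [← exp_add_of_commute (((Commute.refl A).smul_left c).smul_right (-c)), neg_smul,
      add_neg_cancel, exp_zero]
  tfae_have 1 ↔ 2 := by
    rw [hδ]
    constructor
    · intro h
      have h2 : adjoint H * 1 - 1 * H = 0 := by
        have := congrArg (fun X => (Complex.I)⁻¹ • X) h
        simpa [smul_smul, Complex.I_ne_zero] using this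
      rw [mul_one, one_mul, sub_eq_zero] at h2
      exact h2.symm
    · intro h; rw [← h]; simp
  tfae_have 2 → 4 := by
    intro h2 t X Y
    rw [hγ, hγ, hγ, ← h2]
    have : exp (-(Complex.I * ↑t) • H) * exp ((Complex.I * ↑t) • H) = 1 := by
      simpa using hinv (-(Complex.I * t)) H
    calc exp ((Complex.I * ↑t) • H) * (X * Y) * exp (-(Complex.I * ↑t) • H)
        = exp ((Complex.I * ↑t) • H) * X *
            (exp (-(Complex.I * ↑t) • H) * exp ((Complex.I * ↑t) • H)) * Y *
            exp (-(Complex.I * ↑t) • H) := by rw [this]; noncomm_ring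
      _ = _ := by noncomm_ring
  tfae_have 4 → 3 := by
    intro h4 t
    have h := (h4 t 1 1)
    rw [mul_one] at h
    have hu : IsUnit (γ t 1) := by
      rw [hγ]
      exact ((isUnit_exp _).mul isUnit_one).mul (isUnit_exp _)
    exact (hu.mul_left_cancel (by rw [mul_one, ← h])).symm
  tfae_have 3 → 2 := by
    intro h3
    -- exp(itH†) = exp(itH) for all t
    have hexp : ∀ t : ℝ, exp ((Complex.I * t) • adjoint H) = exp ((Complex.I * t) • H) := by
      intro t
      have h := h3 t
      rw [hγ, mul_one] at h
      have := congrArg (fun Z => Z * exp ((Complex.I * t) • H)) h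
      rw [mul_assoc] at this
      have h2 : exp (-(Complex.I * ↑t) • H) * exp ((Complex.I * ↑t) • H) = 1 := by
        simpa using hinv (-(Complex.I * t)) H
      rw [h2, mul_one, one_mul] at this
      exact this
    -- differentiate at 0
    have key : ∀ A : E →L[ℂ] E,
        HasDerivAt (fun t : ℝ => exp ((Complex.I * t) • A)) (Complex.I • A) 0 := by
      intro A
      have h := hasDerivAt_exp_smul_const (𝕂 := ℝ) (Complex.I • A) (0 : ℝ)
      simp only [zero_smul, exp_zero, one_mul] at h
      have heq : (fun t : ℝ => exp (t • Complex.I • A)) =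
          fun t : ℝ => exp ((Complex.I * t) • A) := by
        funext t
        congr 1
        rw [mul_comm, mul_smul]
        norm_num
      rw [heq] at h
      exact h
    have := (key (adjoint H)).unique (by
      have := key H
      exact this.congr_of_eventuallyEq (Filter.Eventually.of_forall fun t => (hexp t)))
    have hIH : Complex.I • adjoint H = Complex.I • H := this
    have := congrArg (fun Z => (Complex.I)⁻¹ • Z) hIH
    simpa [smul_smul, Complex.I_ne_zero] using this.symm
  tfae_have 2 → 5 := by
    intro h2 X Y
    simp only [hδ, ← h2]
    rw [smul_mul_assoc, mul_smul_comm, ← smul_add]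
    congr 1
    noncomm_ring
  tfae_have 5 → 1 := by
    intro h5
    have := h5 1 1
    rw [mul_one, one_mul, mul_one] at this
    have h := right_eq_add.mp this
    exact h
  tfae_finish
end

section
/- Let H₀ and H be continuous linear operators on a finite-dimensional complex inner product space E with H₀ self-adjoint, and suppose H = R H₀ R⁻¹ for some invertible continuous linear operator R such that H₀ commutes with R†R. Then exp(itH†) exp(−itH) = 1 for all t ∈ ℝ; in particular ‖exp(−itH)ψ₀‖ = ‖ψ₀‖ for every ψ₀ ∈ E and every t ∈ ℝ. -/
open ContinuousLinearMap NormedSpace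

set_option maxHeartbeats 2000000 in
/-- If `H = R H₀ R⁻¹` with `H₀` self-adjoint and `[H₀, R†R] = 0`, then
`exp(itH†) exp(−itH) = 1` for all `t`; in particular the evolution `exp(−itH)`
preserves the norm of every vector. -/
theorem exp_adjoint_mul_exp_eq_one_of_similar_selfAdjoint
    {E : Type*} [NormedAddCommGroup E] [InnerProductSpace ℂ E] [FiniteDimensional ℂ E]
    (H₀ H R R' : E →L[ℂ] E)
    (hH₀ : IsSelfAdjoint H₀)
    (hRR' : R * R' = 1) (hR'R : R' * R = 1)
    (hH : H = R * H₀ * R')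
    (hcomm : H₀ * (adjoint R * R) = (adjoint R * R) * H₀) :
    (∀ t : ℝ, exp ((Complex.I * t) • adjoint H) * exp (-(Complex.I * t) • H) = 1) ∧
    (∀ (ψ₀ : E) (t : ℝ), ‖exp (-(Complex.I * t) • H) ψ₀‖ = ‖ψ₀‖) := by
  set A := adjoint R with hA
  set A' := adjoint R' with hA'
  have hAA' : A * A' = 1 := by
    rw [hA, hA', ← star_eq_adjoint R, ← star_eq_adjoint R', ← star_mul, hR'R, star_one]
  have hA'A : A' * A = 1 := by
    rw [hA, hA', ← star_eq_adjoint R, ← star_eq_adjoint R', ← star_mul, hRR', star_one]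
  have hstarH : adjoint H = A' * H₀ * A := by
    rw [hH, hA, hA', ← star_eq_adjoint R, ← star_eq_adjoint R',
      ← star_eq_adjoint (R * H₀ * R'), star_mul, star_mul, hH₀.star_eq, mul_assoc]
  have main : ∀ t : ℝ, exp ((Complex.I * t) • adjoint H) * exp (-(Complex.I * t) • H) = 1 := by
    intro t
    letI : NormedAlgebra ℚ (E →L[ℂ] E) := NormedAlgebra.restrictScalars ℚ ℂ (E →L[ℂ] E)
    set c : ℂ := Complex.I * t with hc
    let u : (E →L[ℂ] E)ˣ := ⟨R, R', hRR', hR'R⟩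
    let v : (E →L[ℂ] E)ˣ := ⟨A', A, hA'A, hAA'⟩
    have h1 : exp (c • adjoint H) = A' * exp (c • H₀) * A := by
      have : c • adjoint H = ↑v * (c • H₀) * ↑v⁻¹ := by
        show c • adjoint H = A' * (c • H₀) * A
        rw [hstarH]; simp only [smul_mul_assoc, mul_smul_comm]
      rw [this, exp_units_conj]; rfl
    have h2 : exp ((-c) • H) = R * exp ((-c) • H₀) * R' := by
      have : (-c) • H = ↑u * ((-c) • H₀) * ↑u⁻¹ := by
        show (-c) • H = R * ((-c) • H₀) * R'
        rw [hH]; simp only [smul_mul_assoc, mul_smul_comm]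
      rw [this, exp_units_conj]; rfl
    have hC : Commute (c • H₀) (A * R) := Commute.smul_left hcomm c
    have hX : exp (c • H₀) * (A * R) = (A * R) * exp (c • H₀) := hC.exp_left
    have hXY : exp (c • H₀) * exp ((-c) • H₀) = 1 := by
      have hcc : Commute (c • H₀) ((-c) • H₀) := ((Commute.refl H₀).smul_left c).smul_right (-c)
      rw [← exp_add_of_commute hcc, ← add_smul, add_neg_cancel, zero_smul, exp_zero]
    rw [h1, h2]
    calc A' * exp (c • H₀) * A * (R * exp ((-c) • H₀) * R')
        = A' * (exp (c • H₀) * (A * R) * exp ((-c) • H₀) * R') := by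
          simp only [mul_assoc]
      _ = A' * ((A * R) * exp (c • H₀) * exp ((-c) • H₀) * R') := by rw [hX]
      _ = A' * A * (R * (exp (c • H₀) * exp ((-c) • H₀)) * R') := by
          simp only [mul_assoc]
      _ = 1 := by rw [hXY, mul_one, hRR', mul_one, hA'A]
  refine ⟨main, ?_⟩
  intro ψ₀ t
  have hadj : adjoint (exp (-(Complex.I * t : ℂ) • H)) = exp ((Complex.I * t : ℂ) • adjoint H) := by
    have hcstar : star (-(Complex.I * t : ℂ)) = Complex.I * t := by
      simp [Complex.conj_I]
    rw [← star_eq_adjoint, star_exp, star_smul, hcstar, star_eq_adjoint]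
  have hinner : (inner ℂ (exp (-(Complex.I * t : ℂ) • H) ψ₀) (exp (-(Complex.I * t : ℂ) • H) ψ₀) : ℂ)
      = inner ℂ ψ₀ ψ₀ := by
    rw [← adjoint_inner_right, ← comp_apply, ← mul_def, hadj, main t, one_apply_eq_self]
  have h2 : ‖exp (-(Complex.I * t : ℂ) • H) ψ₀‖ ^ 2 = ‖ψ₀‖ ^ 2 := by
    rw [inner_self_eq_norm_sq_to_K, inner_self_eq_norm_sq_to_K] at hinner
    exact_mod_cast hinner
  nlinarith [norm_nonneg (exp (-(Complex.I * t : ℂ) • H) ψ₀), norm_nonneg ψ₀]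
end

section
/- Let H be a continuous linear operator on a finite-dimensional complex inner product space E, let ψ₀ ∈ E be nonzero, set Ψ(t) = exp(−itH)ψ₀ (which is nonzero for all t since exp(−itH) is invertible), and let Ψ̂(t) = Ψ(t)/‖Ψ(t)‖. Then for every t ∈ ℝ the map t ↦ Ψ̂(t) is differentiable at t and satisfies the nonlinear Schrödinger equation i dΨ̂/dt = H Ψ̂(t) + (1/2)⟨Ψ̂(t), (H† − H)Ψ̂(t)⟩ · Ψ̂(t). -/
open ContinuousLinearMap NormedSpace

/-- The normalized state `Ψ̂(t) = Ψ(t)/‖Ψ(t)‖`, with `Ψ(t) = exp(−itH)ψ₀` and `ψ₀ ≠ 0`,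
is differentiable and satisfies the nonlinear Schrödinger equation
`i dΨ̂/dt = H Ψ̂(t) + (1/2)⟨Ψ̂(t), (H† − H)Ψ̂(t)⟩ Ψ̂(t)`. -/
theorem normalized_state_nonlinear_schrodinger
    {E : Type*} [NormedAddCommGroup E] [InnerProductSpace ℂ E] [FiniteDimensional ℂ E]
    (H : E →L[ℂ] E) (ψ₀ : E) (hψ₀ : ψ₀ ≠ 0)
    (Ψ Ψhat : ℝ → E)
    (hΨ : ∀ t : ℝ, Ψ t = NormedSpace.exp (-(Complex.I * t) • H) ψ₀)
    (hΨhat : ∀ t : ℝ, Ψhat t = ‖Ψ t‖⁻¹ • Ψ t)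
    (t : ℝ) :
    ∃ d : E, HasDerivAt Ψhat d t ∧
      Complex.I • d
        = H (Ψhat t)
          + ((1 / 2 : ℂ) * (inner ℂ (Ψhat t) ((adjoint H - H) (Ψhat t)) : ℂ)) • Ψhat t := by
  classical
  set A : E →L[ℂ] E := (-Complex.I) • H with hA
  -- rewrite Ψ using the real exponential
  have hΨexp : ∀ s : ℝ, Ψ s = NormedSpace.exp (s • A) ψ₀ := by
    intro s
    rw [hΨ]
    congr 2
    rw [hA, smul_comm, ← Complex.coe_smul, smul_smul]
    congr 1
    ring
  -- Ψ t ≠ 0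
  have hunit : NormedSpace.exp (-(t • A)) * NormedSpace.exp (t • A) = 1 := by
    let +nondep : NormedAlgebra ℚ (E →L[ℂ] E) := .restrictScalars ℚ ℂ (E →L[ℂ] E)
    rw [← exp_add_of_commute ((Commute.refl (t • A)).neg_left)]
    simp
  have hne : Ψ t ≠ 0 := by
    rw [hΨexp]
    intro h
    apply hψ₀
    have h2 : NormedSpace.exp (-(t • A)) ((NormedSpace.exp (t • A)) ψ₀) = NormedSpace.exp (-(t • A)) 0 := by rw [h]
    rwa [← ContinuousLinearMap.mul_apply, hunit, ContinuousLinearMap.one_apply,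
      map_zero] at h2
  set ψ : E := Ψ t with hψ
  set n : ℝ := ‖Ψ t‖ with hn
  have hn0 : n ≠ 0 := norm_ne_zero_iff.mpr hne
  -- derivative of Ψ
  have hΨd : HasDerivAt Ψ (A ψ) t := by
    have h1 : HasDerivAt (fun u : ℝ => NormedSpace.exp (u • A)) (NormedSpace.exp (t • A) * A) t :=
      hasDerivAt_exp_smul_const A t
    have h2 := ((ContinuousLinearMap.apply ℂ E ψ₀).restrictScalars ℝ).hasFDerivAt.comp_hasDerivAt
      t h1
    have hcomm : NormedSpace.exp (t • A) * A = A * NormedSpace.exp (t • A) :=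
      (((Commute.refl A).smul_left t).exp_left).eq
    simp only [ContinuousLinearMap.coe_restrictScalars', Function.comp_def,
      ContinuousLinearMap.apply_apply] at h2
    have h3 : HasDerivAt Ψ ((NormedSpace.exp (t • A) * A) ψ₀) t := by
      have hfun : Ψ = fun u => NormedSpace.exp (u • A) ψ₀ := funext hΨexp
      rw [hfun]; exact h2
    rwa [hcomm, ContinuousLinearMap.mul_apply, ← hΨexp, ← hψ] at h3
  -- derivative of the inner ℂ product
  set c : ℂ := inner ℂ ψ (H ψ) with hc
  have hinner : HasDerivAt (fun s => (inner ℂ (Ψ s) (Ψ s) : ℂ))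
      ((inner ℂ ψ (A ψ) : ℂ) + (inner ℂ (A ψ) ψ : ℂ)) t := hΨd.inner ℂ hΨd
  have hre : HasDerivAt (fun s => ((inner ℂ (Ψ s) (Ψ s) : ℂ)).re)
      (((inner ℂ ψ (A ψ) : ℂ) + (inner ℂ (A ψ) ψ : ℂ)).re) t :=
    Complex.reCLM.hasFDerivAt.comp_hasDerivAt t hinner
  have hreval : ((inner ℂ ψ (A ψ) : ℂ) + (inner ℂ (A ψ) ψ : ℂ)).re = 2 * c.im := by
    rw [hA]
    simp only [ContinuousLinearMap.smul_apply, inner_smul_right, inner_smul_left]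
    rw [← inner_conj_symm (H ψ) ψ, ← hc]
    simp [Complex.add_re, Complex.mul_re]
    ring
  rw [hreval] at hre
  -- derivative of the norm
  have hnormval : ∀ s : ℝ, Real.sqrt ((inner ℂ (Ψ s) (Ψ s) : ℂ)).re = ‖Ψ s‖ := by
    intro s
    rw [@norm_eq_sqrt_re_inner ℂ]
    rfl
  have hrpos : ((inner ℂ ψ ψ : ℂ)).re ≠ 0 := by
    have : Real.sqrt ((inner ℂ ψ ψ : ℂ)).re = n := hnormval t
    intro h
    rw [h, Real.sqrt_zero] at this
    exact hn0 this.symm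
  have hnorm : HasDerivAt (fun s => ‖Ψ s‖) (1 / (2 * n) * (2 * c.im)) t := by
    have h4 := (Real.hasDerivAt_sqrt hrpos).comp t hre
    have hfun : (Real.sqrt ∘ fun s => ((inner ℂ (Ψ s) (Ψ s) : ℂ)).re) = fun s => ‖Ψ s‖ := by
      funext s; exact hnormval s
    rw [hfun] at h4
    refine h4.congr_deriv ?_
    rw [(hnormval t : √(inner ℂ ψ ψ : ℂ).re = n)]
  have hnorm' : HasDerivAt (fun s => ‖Ψ s‖) (c.im / n) t := by
    convert hnorm using 1
    field_simp
  -- derivative of ‖Ψ s‖⁻¹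
  have hinv : HasDerivAt (fun s => ‖Ψ s‖⁻¹) (-(c.im / n) / n ^ 2) t := hnorm'.inv hn0
  -- derivative of Ψhat
  have hd : HasDerivAt Ψhat (n⁻¹ • A ψ + (-(c.im / n) / n ^ 2) • ψ) t := by
    have h5 := hinv.smul hΨd
    have hfun : Ψhat = fun s => ‖Ψ s‖⁻¹ • Ψ s := funext hΨhat
    rw [hfun]
    exact h5
  refine ⟨_, hd, ?_⟩
  have hcoe : ∀ (r : ℝ) (x : E), r • x = ((r : ℂ)) • x := fun r x => (Complex.coe_smul r x).symm
  -- the nonlinear term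
  have hadj : (inner ℂ (Ψhat t) ((adjoint H - H) (Ψhat t)) : ℂ)
      = ((n⁻¹ : ℝ) : ℂ) ^ 2 * (starRingEnd ℂ c - c) := by
    rw [hΨhat t, ← hψ, ← hn, hcoe]
    rw [map_smul, inner_smul_left, inner_smul_right,
      ContinuousLinearMap.sub_apply, inner_sub_right,
      ContinuousLinearMap.adjoint_inner_right]
    rw [← inner_conj_symm (H ψ) ψ, ← hc, Complex.conj_ofReal]
    ring
  have hAψ : A ψ = (-Complex.I) • H ψ := by rw [hA]; rfl
  have hnC : ((n : ℝ) : ℂ) ≠ 0 := Complex.ofReal_ne_zero.mpr hn0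
  have hconj : starRingEnd ℂ c - c = Complex.I * (-2 * c.im) := by
    simp [Complex.ext_iff]
    ring
  rw [hadj, hΨhat t, ← hψ, ← hn, hAψ]
  rw [hcoe n⁻¹ ((-Complex.I) • H ψ), hcoe (-(c.im / n) / n ^ 2) ψ, hcoe n⁻¹ ψ]
  rw [map_smul, smul_add, smul_smul, smul_smul, smul_smul, smul_smul]
  congr 1
  · congr 1
    push_cast
    linear_combination -(↑n : ℂ)⁻¹ * Complex.I_sq
  · congr 1
    rw [hconj]
    push_cast
    field_simp
end

section
/- Let H and X be continuous linear operators on a finite-dimensional complex inner product space E, let ψ₀ ∈ E be nonzero, Ψ(t) = exp(−itH)ψ₀, Ψ̂(t) = Ψ(t)/‖Ψ(t)‖, and define δ_Ψ̂(X;t) = i(H†X − XH) − i⟨Ψ̂(t), (H† − H)Ψ̂(t)⟩ · X. Then for every t ∈ ℝ, the function t ↦ ⟨Ψ̂(t), X Ψ̂(t)⟩ is differentiable at t with derivative ⟨Ψ̂(t), δ_Ψ̂(X;t) Ψ̂(t)⟩. -/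
open ContinuousLinearMap NormedSpace

/-- The mean value `t ↦ ⟨Ψ̂(t), X Ψ̂(t)⟩` is differentiable with derivative
`⟨Ψ̂(t), δ_Ψ̂(X;t) Ψ̂(t)⟩`, where
`δ_Ψ̂(X;t) = i(H†X − XH) − i⟨Ψ̂(t), (H† − H)Ψ̂(t)⟩ • X`. -/
theorem mean_value_hasDerivAt
    {E : Type*} [NormedAddCommGroup E] [InnerProductSpace ℂ E] [FiniteDimensional ℂ E]
    (H X : E →L[ℂ] E) (ψ₀ : E) (hψ₀ : ψ₀ ≠ 0)
    (Ψ Ψhat : ℝ → E)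
    (hΨ : ∀ t : ℝ, Ψ t = exp (-(Complex.I * t) • H) ψ₀)
    (hΨhat : ∀ t : ℝ, Ψhat t = ‖Ψ t‖⁻¹ • Ψ t)
    (δ : (E →L[ℂ] E) → ℝ → (E →L[ℂ] E))
    (hδ : ∀ (A : E →L[ℂ] E) (t : ℝ),
      δ A t = Complex.I • (adjoint H * A - A * H)
        - (Complex.I * (inner ℂ (Ψhat t) ((adjoint H - H) (Ψhat t)) : ℂ)) • A)
    (t : ℝ) :
    HasDerivAt (fun s : ℝ => (inner ℂ (Ψhat s) (X (Ψhat s)) : ℂ))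
      (inner ℂ (Ψhat t) ((δ X t) (Ψhat t))) t := by
  have : CompleteSpace E := FiniteDimensional.complete ℂ E
  set B : E →L[ℂ] E := (-Complex.I) • H with hB
  -- Rewrite Ψ using a real-scalar exponential
  have hsmul : ∀ s : ℝ, -(Complex.I * (s : ℂ)) • H = s • B := by
    intro s
    rw [hB, ← Complex.coe_smul, smul_smul]
    congr 1
    ring
  have hexp : ∀ s : ℝ, Ψ s = exp (s • B) ψ₀ := by
    intro s
    rw [hΨ s, hsmul s]
  -- Ψ never vanishes
  have hne : ∀ s : ℝ, Ψ s ≠ 0 := by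
    intro s h
    apply hψ₀
    have h1 : exp (-(s • B)) * exp (s • B) = 1 := by
      have : NormedAlgebra ℚ (E →L[ℂ] E) := NormedAlgebra.restrictScalars ℚ ℂ _
      rw [← exp_add_of_commute (Commute.neg_left (Commute.refl _)), neg_add_cancel, exp_zero]
    have h2 : exp (-(s • B)) (exp (s • B) ψ₀) = ψ₀ := by
      rw [← ContinuousLinearMap.mul_apply, h1, ContinuousLinearMap.one_apply]
    rw [← h2, ← hexp s, h, map_zero]
  -- derivative of Ψ
  have hΨd : HasDerivAt Ψ (B (Ψ t)) t := by
    have h1 : HasDerivAt (fun s : ℝ => exp (s • B)) (B * exp (t • B)) t :=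
      hasDerivAt_exp_smul_const' B t
    have L : (E →L[ℂ] E) →L[ℝ] E :=
      ((ContinuousLinearMap.apply ℂ E ψ₀).restrictScalars ℝ)
    have h2 := (((ContinuousLinearMap.apply ℂ E ψ₀).restrictScalars ℝ)).hasFDerivAt.comp_hasDerivAt
      t h1
    have h3 : HasDerivAt (fun s : ℝ => exp (s • B) ψ₀) ((B * exp (t • B)) ψ₀) t := by
      exact h2
    have h4 : (B * exp (t • B)) ψ₀ = B (Ψ t) := by
      rw [ContinuousLinearMap.mul_apply, ← hexp t]
    rw [h4] at h3
    exact h3.congr_of_eventuallyEq (by filter_upwards with s using (hexp s))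
  -- derivative of X ∘ Ψ
  have hXΨd : HasDerivAt (fun s => X (Ψ s)) (X (B (Ψ t))) t :=
    ((X.restrictScalars ℝ).hasFDerivAt.comp_hasDerivAt t hΨd)
  set u := Ψ t with hu
  -- derivative of the numerator and denominator
  have hg : HasDerivAt (fun s : ℝ => (inner ℂ (Ψ s) (X (Ψ s)) : ℂ))
      ((inner ℂ u (X (B u)) : ℂ) + inner ℂ (B u) (X u)) t :=
    HasDerivAt.inner ℂ hΨd hXΨd
  have hN : HasDerivAt (fun s : ℝ => (inner ℂ (Ψ s) (Ψ s) : ℂ))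
      ((inner ℂ u (B u) : ℂ) + inner ℂ (B u) u) t :=
    HasDerivAt.inner ℂ hΨd hΨd
  have hNne : (inner ℂ u u : ℂ) ≠ 0 := inner_self_ne_zero.mpr (hne t)
  have hNinv : HasDerivAt (fun s : ℝ => (inner ℂ (Ψ s) (Ψ s) : ℂ)⁻¹)
      (((inner ℂ u (B u) : ℂ) + inner ℂ (B u) u) • (-((inner ℂ u u : ℂ) ^ 2)⁻¹)) t :=
    HasDerivAt.scomp t (hasDerivAt_inv hNne) hN
  have key := hNinv.mul hg
  -- normalization identity
  have hnorm : ∀ (A : E →L[ℂ] E) (s : ℝ),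
      (inner ℂ (Ψhat s) (A (Ψhat s)) : ℂ) = (inner ℂ (Ψ s) (Ψ s) : ℂ)⁻¹ * inner ℂ (Ψ s) (A (Ψ s)) := by
    intro A s
    have h0 : ((‖Ψ s‖ : ℝ) : ℂ) ≠ 0 := by
      simpa using norm_ne_zero_iff.mpr (hne s)
    rw [hΨhat s, ← Complex.coe_smul, map_smul, inner_smul_left, inner_smul_right,
      Complex.conj_ofReal, inner_self_eq_norm_sq_to_K]
    push_cast
    field_simp
    exact (mul_div_cancel_left₀ _ (pow_ne_zero 2 h0)).symm
  have funeq : (fun s : ℝ => (inner ℂ (Ψhat s) (X (Ψhat s)) : ℂ))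
      = fun s : ℝ => (inner ℂ (Ψ s) (Ψ s) : ℂ)⁻¹ * inner ℂ (Ψ s) (X (Ψ s)) :=
    funext fun s => hnorm X s
  rw [funeq]
  convert key using 1
  · rfl
  · rfl
  -- compute the target value
  rw [hnorm (δ X t) t, hδ]
  have hBu : B u = (-Complex.I) • H u := rfl
  have expand : ((Complex.I • (adjoint H * X - X * H)
        - (Complex.I * (inner ℂ (Ψhat t) ((adjoint H - H) (Ψhat t)) : ℂ)) • X) u)
      = Complex.I • (adjoint H (X u) - X (H u))
        - (Complex.I * (inner ℂ (Ψhat t) ((adjoint H - H) (Ψhat t)) : ℂ)) • X u := by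
    simp [ContinuousLinearMap.sub_apply, ContinuousLinearMap.smul_apply,
      ContinuousLinearMap.mul_apply]
  rw [expand, hnorm (adjoint H - H) t]
  rw [inner_sub_right, inner_smul_right, inner_smul_right, inner_sub_right]
  rw [show ((adjoint H - H) u : E) = adjoint H u - H u from rfl, inner_sub_right]
  rw [adjoint_inner_right, adjoint_inner_right]
  -- now pure algebra
  rw [hBu]
  simp only [inner_smul_left, inner_smul_right, map_smul, map_neg, inner_neg_right,
    Complex.conj_neg_I, smul_neg, neg_smul, inner_neg_left]
  set N : ℂ := inner ℂ u u
  set g : ℂ := inner ℂ u (X u)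
  set p : ℂ := (inner ℂ (H u) (X u) : ℂ)
  set q : ℂ := (inner ℂ u (X (H u)) : ℂ)
  set r : ℂ := (inner ℂ (H u) u : ℂ)
  set m : ℂ := (inner ℂ u (H u) : ℂ)
  simp only [Complex.conj_I]
  field_simp
  have hN2 : N ^ 2 * N⁻¹ ^ 2 = 1 := by rw [← mul_pow, mul_inv_cancel₀ hNne, one_pow]
  linear_combination (Complex.I * r * g - Complex.I * m * g) * hN2
end

section
/- Let H and X be continuous linear operators on a finite-dimensional complex inner product space E with H†X = XH, let ψ₀ ∈ E with ‖ψ₀‖ = 1, Ψ(t) = exp(−itH)ψ₀, and Ψ̂(t) = Ψ(t)/‖Ψ(t)‖. Then for all t ∈ ℝ, ⟨Ψ̂(t), X Ψ̂(t)⟩ = ⟨ψ₀, X ψ₀⟩ / ‖Ψ(t)‖²; equivalently, t ↦ ‖Ψ(t)‖² · ⟨Ψ̂(t), X Ψ̂(t)⟩ is constant. -/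
open ContinuousLinearMap NormedSpace

lemma exp_semiconj_aux {𝔸 : Type*} [NormedRing 𝔸] [NormedAlgebra ℂ 𝔸] [CompleteSpace 𝔸]
    {a b x : 𝔸} (h : a * x = x * b) : exp a * x = x * exp b := by
  have hpow : ∀ n : ℕ, a ^ n * x = x * b ^ n := by
    intro n
    induction n with
    | zero => simp
    | succ n ih => rw [pow_succ', pow_succ', mul_assoc, ih, ← mul_assoc, h, mul_assoc]
  simp only [exp_eq_tsum ℂ]
  rw [← (expSeries_summable' (𝕂 := ℂ) a).tsum_mul_right x,
    ← (expSeries_summable' (𝕂 := ℂ) b).tsum_mul_left x]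
  congr 1
  ext n
  rw [smul_mul_assoc, mul_smul_comm, hpow n]

/-- If `H†X = XH` and `‖ψ₀‖ = 1`, then for all `t`,
`⟨Ψ̂(t), X Ψ̂(t)⟩ = ⟨ψ₀, X ψ₀⟩ / ‖Ψ(t)‖²`; equivalently,
`t ↦ ‖Ψ(t)‖² ⟨Ψ̂(t), X Ψ̂(t)⟩` is constant. -/
theorem gamma_symmetry_mean_value_decay
    {E : Type*} [NormedAddCommGroup E] [InnerProductSpace ℂ E] [FiniteDimensional ℂ E]
    (H X : E →L[ℂ] E) (hX : adjoint H * X = X * H)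
    (ψ₀ : E) (hψ₀ : ‖ψ₀‖ = 1)
    (Ψ Ψhat : ℝ → E)
    (hΨ : ∀ t : ℝ, Ψ t = exp (-(Complex.I * t) • H) ψ₀)
    (hΨhat : ∀ t : ℝ, Ψhat t = ‖Ψ t‖⁻¹ • Ψ t) :
    (∀ t : ℝ, (inner ℂ (Ψhat t) (X (Ψhat t)) : ℂ)
        = (inner ℂ ψ₀ (X ψ₀) : ℂ) / ((‖Ψ t‖ ^ 2 : ℝ) : ℂ)) ∧
    (∀ t : ℝ, ((‖Ψ t‖ ^ 2 : ℝ) : ℂ) * (inner ℂ (Ψhat t) (X (Ψhat t)) : ℂ)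
        = (inner ℂ ψ₀ (X ψ₀) : ℂ)) := by
  -- key invariance : ⟨Ψ t, X (Ψ t)⟩ = ⟨ψ₀, X ψ₀⟩
  have key : ∀ t : ℝ, (inner ℂ (Ψ t) (X (Ψ t)) : ℂ) = (inner ℂ ψ₀ (X ψ₀) : ℂ) := by
    intro t
    let _ : NormedAlgebra ℚ (E →L[ℂ] E) := .restrictScalars ℚ ℂ _
    set A : E →L[ℂ] E := -(Complex.I * t) • H with hA
    have hstarA : star A = (Complex.I * t) • adjoint H := by
      rw [hA]
      simp [star_smul, star_eq_adjoint, Complex.star_def, Complex.conj_ofReal, map_mul]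
    have hsemi : star A * X = X * (-A) := by
      rw [hstarA, hA, smul_mul_assoc, hX]
      simp [mul_smul_comm]
    have hexp : exp (star A) * X * exp A = X := by
      rw [exp_semiconj_aux hsemi, mul_assoc,
        ← exp_add_of_commute ((Commute.refl A).neg_left),
        neg_add_cancel, exp_zero, mul_one]
    calc (inner ℂ (Ψ t) (X (Ψ t)) : ℂ)
        = inner ℂ (exp A ψ₀) (X (exp A ψ₀)) := by rw [hΨ]
      _ = inner ℂ ψ₀ ((adjoint (exp A)) (X (exp A ψ₀))) := by
          rw [adjoint_inner_right]
      _ = inner ℂ ψ₀ ((exp (star A) * X * exp A) ψ₀) := by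
          rw [← star_eq_adjoint, ← star_exp]; rfl
      _ = inner ℂ ψ₀ (X ψ₀) := by rw [hexp]
  -- Ψ t ≠ 0
  have hne : ∀ t : ℝ, Ψ t ≠ 0 := by
    intro t ht
    let _ : NormedAlgebra ℚ (E →L[ℂ] E) := .restrictScalars ℚ ℂ _
    set A : E →L[ℂ] E := -(Complex.I * t) • H with hA
    have : ψ₀ = exp (-A) (Ψ t) := by
      rw [hΨ t, ← hA, ← ContinuousLinearMap.comp_apply, ← ContinuousLinearMap.mul_def,
        ← exp_add_of_commute ((Commute.refl A).neg_left), neg_add_cancel, exp_zero,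
        ContinuousLinearMap.one_apply]
    rw [ht, map_zero] at this
    rw [this, norm_zero] at hψ₀
    exact one_ne_zero hψ₀.symm
  have hmain : ∀ t : ℝ, (inner ℂ (Ψhat t) (X (Ψhat t)) : ℂ)
      = (inner ℂ ψ₀ (X ψ₀) : ℂ) / ((‖Ψ t‖ ^ 2 : ℝ) : ℂ) := by
    intro t
    have hn : (‖Ψ t‖ : ℂ) ≠ 0 := by
      simpa using norm_ne_zero_iff.2 (hne t)
    rw [hΨhat t, ContinuousLinearMap.map_smul_of_tower]
    simp only [RCLike.real_smul_eq_coe_smul (K := ℂ)]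
    rw [inner_smul_left, inner_smul_right, key t]
    simp only [RCLike.conj_ofReal]
    push_cast
    field_simp
    exact mul_div_cancel_right₀ _ (pow_ne_zero 2 hn)
  refine ⟨hmain, fun t => ?_⟩
  rw [hmain t]
  have hn : ((‖Ψ t‖ : ℝ) : ℂ) ^ 2 ≠ 0 := by
    simpa using norm_ne_zero_iff.2 (hne t)
  push_cast
  rw [mul_comm, div_mul_cancel₀ _ hn]
end

section
/- Let H be a continuous linear operator on a finite-dimensional complex inner product space E, ψ₀ ∈ E nonzero, Ψ(t) = exp(−itH)ψ₀, Ψ̂(t) = Ψ(t)/‖Ψ(t)‖, and define δ_Ψ̂(A;t) = i(H†A − AH) − i⟨Ψ̂(t), (H† − H)Ψ̂(t)⟩ · A. If a continuous linear operator X satisfies δ_Ψ̂(X;t) = 0 for all t ∈ ℝ, then each of the operators X†, H†X, XH, X†H and H†X† also satisfies δ_Ψ̂(·;t) = 0 for all t ∈ ℝ. -/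
open ContinuousLinearMap NormedSpace

/-- If `X` is a Ψ̂-integral of motion (`δ_Ψ̂(X;t) = 0` for all `t`), then so are
`X†`, `H†X`, `XH`, `X†H` and `H†X†`. -/
theorem psi_hat_integrals_of_motion_closure
    {E : Type*} [NormedAddCommGroup E] [InnerProductSpace ℂ E] [FiniteDimensional ℂ E]
    (H : E →L[ℂ] E) (ψ₀ : E) (hψ₀ : ψ₀ ≠ 0)
    (Ψ Ψhat : ℝ → E)
    (hΨ : ∀ t : ℝ, Ψ t = exp (-(Complex.I * t) • H) ψ₀)
    (hΨhat : ∀ t : ℝ, Ψhat t = ‖Ψ t‖⁻¹ • Ψ t)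
    (δ : (E →L[ℂ] E) → ℝ → (E →L[ℂ] E))
    (hδ : ∀ (A : E →L[ℂ] E) (t : ℝ),
      δ A t = Complex.I • (adjoint H * A - A * H)
        - (Complex.I * (inner ℂ (Ψhat t) ((adjoint H - H) (Ψhat t)) : ℂ)) • A)
    (X : E →L[ℂ] E) (hX : ∀ t : ℝ, δ X t = 0) :
    (∀ t : ℝ, δ (adjoint X) t = 0) ∧
    (∀ t : ℝ, δ (adjoint H * X) t = 0) ∧
    (∀ t : ℝ, δ (X * H) t = 0) ∧
    (∀ t : ℝ, δ (adjoint X * H) t = 0) ∧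
    (∀ t : ℝ, δ (adjoint H * adjoint X) t = 0) := by
  set c : ℝ → ℂ := fun t => inner ℂ (Ψhat t) ((adjoint H - H) (Ψhat t)) with hc_def
  -- c is purely imaginary: conj (c t) = - c t
  have hc : ∀ t, (starRingEnd ℂ) (c t) = - c t := by
    intro t
    have h1 : (starRingEnd ℂ) (c t)
        = inner ℂ ((adjoint H - H) (Ψhat t)) (Ψhat t) := by
      simp [hc_def, inner_conj_symm]
    rw [h1, ← ContinuousLinearMap.adjoint_inner_right]
    have : adjoint (adjoint H - H) = -(adjoint H - H) := by
      simp [map_sub, adjoint_adjoint, neg_sub]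
    rw [this]
    simp only [hc_def, ContinuousLinearMap.neg_apply, inner_neg_right]
  -- from hX: the commutation identity
  have hX' : ∀ t, adjoint H * X - X * H = c t • X := by
    intro t
    have h := hX t
    rw [hδ] at h
    have h2 : Complex.I • (adjoint H * X - X * H) = Complex.I • (c t • X) := by
      rw [smul_smul]
      exact sub_eq_zero.mp h
    exact smul_right_injective _ Complex.I_ne_zero h2
  -- anything satisfying the identity is killed by δ
  have key : ∀ A : E →L[ℂ] E, (∀ t, adjoint H * A - A * H = c t • A) →
      ∀ t, δ A t = 0 := by
    intro A hA t
    rw [hδ, hA t, smul_smul, sub_self]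
  -- identity is preserved by adjoint
  have hadj : ∀ t, adjoint H * adjoint X - adjoint X * H = c t • adjoint X := by
    intro t
    have h := congrArg (star : (E →L[ℂ] E) → (E →L[ℂ] E)) (hX' t)
    simp only [star_sub, star_mul, star_smul, ContinuousLinearMap.star_eq_adjoint,
      adjoint_adjoint, hc t, RCLike.star_def] at h
    have h3 := congrArg Neg.neg h
    simpa [neg_sub, neg_smul] using h3
  -- identity is preserved by left multiplication by H†
  have stepL : ∀ A : E →L[ℂ] E, (∀ t, adjoint H * A - A * H = c t • A) →
      ∀ t, adjoint H * (adjoint H * A) - (adjoint H * A) * H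
        = c t • (adjoint H * A) := by
    intro A hA t
    have : adjoint H * (adjoint H * A) - (adjoint H * A) * H
        = adjoint H * (adjoint H * A - A * H) := by
      rw [mul_sub, mul_assoc]
    rw [this, hA t, mul_smul_comm]
  -- identity is preserved by right multiplication by H
  have stepR : ∀ A : E →L[ℂ] E, (∀ t, adjoint H * A - A * H = c t • A) →
      ∀ t, adjoint H * (A * H) - (A * H) * H = c t • (A * H) := by
    intro A hA t
    have : adjoint H * (A * H) - (A * H) * H
        = (adjoint H * A - A * H) * H := by
      rw [sub_mul, mul_assoc, mul_assoc]
    rw [this, hA t, smul_mul_assoc]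
  exact ⟨key _ hadj, key _ (stepL X hX'), key _ (stepR X hX'),
    key _ (stepR _ hadj), key _ (stepL _ hadj)⟩
end

section
/- Let H be a continuous linear operator on a finite-dimensional complex inner product space E, and let φ ∈ E with ‖φ‖ = 1 and Hφ = Eφ for some E ∈ ℂ (not necessarily real). Take ψ₀ = φ, Ψ(t) = exp(−itH)ψ₀, Ψ̂(t) = Ψ(t)/‖Ψ(t)‖, and define δ_Ψ̂(X;t) = i(H†X − XH) − i⟨Ψ̂(t), (H† − H)Ψ̂(t)⟩ · X. Then ⟨Ψ̂(t), (H† − H)Ψ̂(t)⟩ = −2i·Im(E) for all t, so that δ_Ψ̂(X;t) = i(H†X − XH) − 2·Im(E)·X for every continuous linear operator X and every t ∈ ℝ; in particular δ_Ψ̂(X;t) is independent of t. -/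
open ContinuousLinearMap NormedSpace

lemma exp_apply_eigenvector {E : Type*} [NormedAddCommGroup E] [InnerProductSpace ℂ E]
    [FiniteDimensional ℂ E] (A : E →L[ℂ] E) (φ : E) (c : ℂ) (h : A φ = c • φ) :
    exp A φ = Complex.exp c • φ := by
  have hpow : ∀ n : ℕ, (A ^ n) φ = c ^ n • φ := by
    intro n
    induction n with
    | zero => simp
    | succ n ih =>
      rw [pow_succ, ContinuousLinearMap.mul_apply, h, map_smul, ih, smul_smul, pow_succ, mul_comm]
  have hsum := (expSeries_summable' (𝕂 := ℂ) A).hasSum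
  have hmap := hsum.mapL (ContinuousLinearMap.apply ℂ E φ)
  have h1 : exp A φ = ∑' n : ℕ, ((n.factorial : ℂ)⁻¹ • A ^ n) φ := by
    rw [exp_eq_tsum (𝕂 := ℂ)]
    exact (hmap.tsum_eq).symm
  rw [h1]
  have h2 : ∀ n : ℕ, ((n.factorial : ℂ)⁻¹ • A ^ n) φ = ((n.factorial : ℂ)⁻¹ * c ^ n) • φ := by
    intro n
    rw [ContinuousLinearMap.smul_apply, hpow, smul_smul]
  simp_rw [h2]
  rw [Summable.tsum_smul_const, Complex.exp_eq_exp_ℂ, exp_eq_tsum (𝕂 := ℂ)]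
  · simp [smul_eq_mul]
  · exact expSeries_summable' (𝕂 := ℂ) c

/-- If the initial state is a unit eigenvector `φ` of `H` with (possibly complex)
eigenvalue `E₀`, then `⟨Ψ̂(t), (H† − H)Ψ̂(t)⟩ = −2i·Im(E₀)` for all `t`, so that
`δ_Ψ̂(X;t) = i(H†X − XH) − 2·Im(E₀)·X` for every operator `X` and every `t`;
in particular `δ_Ψ̂(X;t)` is independent of `t`. -/
theorem delta_psi_hat_eigenvector_case
    {E : Type*} [NormedAddCommGroup E] [InnerProductSpace ℂ E] [FiniteDimensional ℂ E]
    (H : E →L[ℂ] E) (φ : E) (E₀ : ℂ) (hφ : ‖φ‖ = 1) (hHφ : H φ = E₀ • φ)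
    (ψ₀ : E) (hψ₀ : ψ₀ = φ)
    (Ψ Ψhat : ℝ → E)
    (hΨ : ∀ t : ℝ, Ψ t = exp (-(Complex.I * t) • H) ψ₀)
    (hΨhat : ∀ t : ℝ, Ψhat t = ‖Ψ t‖⁻¹ • Ψ t)
    (δ : (E →L[ℂ] E) → ℝ → (E →L[ℂ] E))
    (hδ : ∀ (A : E →L[ℂ] E) (t : ℝ),
      δ A t = Complex.I • (adjoint H * A - A * H)
        - (Complex.I * (inner ℂ (Ψhat t) ((adjoint H - H) (Ψhat t)) : ℂ)) • A) :
    (∀ t : ℝ, (inner ℂ (Ψhat t) ((adjoint H - H) (Ψhat t)) : ℂ)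
        = -2 * Complex.I * (E₀.im : ℂ)) ∧
    (∀ (X : E →L[ℂ] E) (t : ℝ),
      δ X t = Complex.I • (adjoint H * X - X * H) - (2 * E₀.im : ℝ) • X) := by
  have key : ∀ t : ℝ, (inner ℂ (Ψhat t) ((adjoint H - H) (Ψhat t)) : ℂ)
      = -2 * Complex.I * (E₀.im : ℂ) := by
    intro t
    have heig : ((-(Complex.I * t) • H) : E →L[ℂ] E) φ = (-(Complex.I * t) * E₀) • φ := by
      rw [ContinuousLinearMap.smul_apply, hHφ, smul_smul]
    have hΨt : Ψ t = Complex.exp (-(Complex.I * t) * E₀) • φ := by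
      rw [hΨ, hψ₀, exp_apply_eigenvector _ _ _ heig]
    set z : ℂ := Complex.exp (-(Complex.I * t) * E₀) with hz
    have hznorm : ‖Ψ t‖ = ‖z‖ := by rw [hΨt, norm_smul, hφ, mul_one]
    have hzne : z ≠ 0 := Complex.exp_ne_zero _
    set c : ℂ := (‖z‖ : ℂ)⁻¹ * z with hc
    have hΨhatt' : Ψhat t = c • φ := by
      rw [hΨhat, hznorm, hΨt, ← Complex.coe_smul, smul_smul, hc]
      push_cast
      rfl
    have hcnorm : (starRingEnd ℂ) c * c = 1 := by
      rw [← Complex.normSq_eq_conj_mul_self, hc, map_mul, map_inv₀, Complex.normSq_ofReal,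
        Complex.normSq_eq_norm_sq]
      have h0 : ‖z‖ ≠ 0 := norm_ne_zero_iff.mpr hzne
      rw [sq]
      have habs : ((‖z‖ : ℝ) : ℂ) ≠ 0 := by
        exact_mod_cast h0
      field_simp
      norm_num
    have hφ2 : (inner ℂ φ φ : ℂ) = 1 := by
      rw [inner_self_eq_norm_sq_to_K, hφ]; norm_num
    have hinner : (inner ℂ φ ((adjoint H - H) φ) : ℂ) = (starRingEnd ℂ) E₀ - E₀ := by
      rw [ContinuousLinearMap.sub_apply, inner_sub_right,
        ContinuousLinearMap.adjoint_inner_right, hHφ, inner_smul_left, inner_smul_right,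
        hφ2, mul_one, mul_one]
    rw [hΨhatt', map_smul, inner_smul_left, inner_smul_right, ← mul_assoc, hcnorm, one_mul,
      hinner]
    apply Complex.ext <;> simp [Complex.conj_re, Complex.conj_im] <;> ring
  refine ⟨key, fun X t => ?_⟩
  rw [hδ, key t]
  congr 1
  have h3 : Complex.I * (-2 * Complex.I * (E₀.im : ℂ)) = ((2 * E₀.im : ℝ) : ℂ) := by
    push_cast
    linear_combination (-2 * (E₀.im : ℂ)) * Complex.I_sq
  rw [h3, Complex.coe_smul]
end
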